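/- Let σ₁, σ₂ ⊆ ℂ be nonempty compact sets with Re(x) < 0 on σ₁ and Re(x) > 0 on σ₂, σ = σ₁ ∪ σ₂. Suppose g : σ₁ → ℂ is a uniform-plus-variation limit on σ₁ of polynomials in two real variables, and define ĝ : σ → ℂ by ĝ = g on σ₁ and ĝ = 0 on σ₂. Then for each ε > 0 there exists a function of the form χ·p on σ (where p is a polynomial in two real variables and χ is the indicator function of the closed left half-plane {Re z ≤ 0} restricted to σ) with ‖ĝ − χ·p‖_{BV(σ)} < ε, where ‖h‖_{BV(σ)} = ‖h‖_∞ + var(h, σ). -/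

import Mathlib

open MvPolynomial
open scoped ENNReal NNReal Classical
open scoped ENNReal NNReal Classical

/-- Cross product of two planar vectors (identified with complex numbers). -/
def crossC (v w : ℂ) : ℝ := v.re * w.im - v.im * w.re

/-- Signed side of the point `x` relative to the line through `u` with direction `v`. -/
def sideC (u v x : ℂ) : ℝ := crossC v (x - u)

/-- The segment `[x i, x (i+1)]` is a crossing segment of the list `x` on the line
through `u` with direction `v`. -/
def CrossSeg {n : ℕ} (u v : ℂ) (x : Fin (n+1) → ℂ) (i : Fin n) : Prop :=
  (sideC u v (x i.castSucc) * sideC u v (x i.succ) < 0) ∨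
  ((i : ℕ) = 0 ∧ sideC u v (x i.castSucc) = 0) ∨
  (sideC u v (x i.castSucc) ≠ 0 ∧ sideC u v (x i.succ) = 0)

/-- Number of crossing segments of a list on a given line. -/
noncomputable def vfLine {n : ℕ} (u v : ℂ) (x : Fin (n+1) → ℂ) : ℕ :=
  Nat.card {i : Fin n // CrossSeg u v x i}

/-- Variation factor of a list: the maximum of `vfLine` over all lines. -/
noncomputable def vf {n : ℕ} (x : Fin (n+1) → ℂ) : ℕ :=
  sSup {m : ℕ | ∃ u v : ℂ, v ≠ 0 ∧ m = vfLine u v x}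

/-- Curve variation of `f` along a list of points. -/
noncomputable def cvar {n : ℕ} (f : ℂ → ℂ) (x : Fin (n+1) → ℂ) : ℝ :=
  ∑ i : Fin n, ‖f (x i.succ) - f (x i.castSucc)‖

/-- Two-dimensional variation of `f` on `σ`. -/
noncomputable def twoVar (f : ℂ → ℂ) (σ : Set ℂ) : ℝ≥0∞ :=
  ⨆ (n : ℕ) (x : Fin (n+1) → ℂ) (_ : ∀ i, x i ∈ σ)
    (_ : ∀ i : Fin n, x i.castSucc ≠ x i.succ),
    ENNReal.ofReal (cvar f x) / (vf x : ℝ≥0∞)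

/-- BV norm: sup norm plus two-dimensional variation on `σ`. -/
noncomputable def BVnorm (h : ℂ → ℂ) (σ : Set ℂ) : ℝ≥0∞ :=
  (⨆ z ∈ σ, (‖h z‖₊ : ℝ≥0∞)) + twoVar h σ

/-- Evaluation of a polynomial in two real variables at a point of the plane. -/
noncomputable def polyEval (p : MvPolynomial (Fin 2) ℂ) (z : ℂ) : ℂ :=
  aeval ![(z.re : ℂ), (z.im : ℂ)] p
section AuxVF

variable {n : ℕ} (u v : ℂ) (x : Fin (n+1) → ℂ)

lemma vfLine_le : vfLine u v x ≤ n := by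
  have h := Nat.card_le_card_of_injective (Subtype.val : {i : Fin n // CrossSeg u v x i} → Fin n)
    Subtype.coe_injective
  simpa [vfLine, Nat.card_eq_fintype_card] using h

lemma vf_set_nonempty : {m : ℕ | ∃ u v : ℂ, v ≠ 0 ∧ m = vfLine u v x}.Nonempty :=
  ⟨vfLine 0 1 x, 0, 1, one_ne_zero, rfl⟩

lemma vf_set_bdd : BddAbove {m : ℕ | ∃ u v : ℂ, v ≠ 0 ∧ m = vfLine u v x} :=
  ⟨n, fun m ⟨u, v, _, hm⟩ => hm ▸ vfLine_le u v x⟩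

lemma vfLine_le_vf (hv : v ≠ 0) : vfLine u v x ≤ vf x :=
  le_csSup (vf_set_bdd x) ⟨u, v, hv, rfl⟩

lemma vf_le {N : ℕ} (h : ∀ u v : ℂ, v ≠ 0 → vfLine u v x ≤ N) : vf x ≤ N :=
  csSup_le (vf_set_nonempty x) (fun m ⟨u, v, hv, hm⟩ => hm ▸ h u v hv)

lemma one_le_vf (hn : 0 < n) : 1 ≤ vf x := by
  refine le_trans ?_ (vfLine_le_vf (x 0) 1 x one_ne_zero)
  have : Nonempty {i : Fin n // CrossSeg (x 0) 1 x i} := by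
    refine ⟨⟨⟨0, hn⟩, Or.inr (Or.inl ⟨rfl, ?_⟩)⟩⟩
    have h0 : (⟨0, hn⟩ : Fin n).castSucc = (0 : Fin (n+1)) := rfl
    rw [h0]
    simp [sideC, crossC]
  have h := Nat.card_pos (α := {i : Fin n // CrossSeg (x 0) 1 x i})
  exact h

end AuxVF
section Cross

variable {n : ℕ} (u v : ℂ) (x : Fin (n+1) → ℂ)

lemma exists_cross_between :
    ∀ b a : ℕ, ∀ (hab : a < b) (hb : b ≤ n),
    sideC u v (x ⟨a, by omega⟩) ≠ 0 →
    (sideC u v (x ⟨a, by omega⟩) * sideC u v (x ⟨b, by omega⟩) < 0 ∨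
      sideC u v (x ⟨b, by omega⟩) = 0) →
    ∃ i : Fin n, a ≤ (i : ℕ) ∧ (i : ℕ) < b ∧ CrossSeg u v x i := by
  intro b
  induction b using Nat.strong_induction_on with
  | _ b IH =>
    intro a hab hb hs hcond
    have hbn : b ≤ n := hb
    rcases Nat.lt_or_ge a (b-1) with hlt | hge
    · -- a < b - 1
      set sc := sideC u v (x ⟨b-1, by omega⟩) with hsc_def
      by_cases hsc : sc = 0
      · obtain ⟨i, h1, h2, h3⟩ := IH (b-1) (by omega) a hlt (by omega) hs (Or.inr hsc)
        exact ⟨i, h1, by omega, h3⟩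
      · set i₀ : Fin n := ⟨b-1, by omega⟩ with hi₀
        have hics : x i₀.castSucc = x ⟨b-1, by omega⟩ := by
          congr 1
        have hisu : x i₀.succ = x ⟨b, by omega⟩ := by
          congr 1
          ext
          simp [hi₀]
          omega
        rcases hcond with hprod | hzb
        · by_cases h2 : sideC u v (x ⟨a, by omega⟩) * sc < 0
          · obtain ⟨i, ha1, ha2, ha3⟩ := IH (b-1) (by omega) a hlt (by omega) hs (Or.inl h2)
            exact ⟨i, ha1, by omega, ha3⟩
          · refine ⟨i₀, by simp [hi₀]; omega, by simp [hi₀]; omega, Or.inl ?_⟩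
            rw [hics, hisu]
            push_neg at h2
            have hpos : 0 < sideC u v (x ⟨a, by omega⟩) * sc :=
              lt_of_le_of_ne h2 (by
                intro hc
                rcases mul_eq_zero.mp hc.symm with h | h
                · exact hs h
                · exact hsc h)
            have goal2 : sc * sideC u v (x ⟨b, by omega⟩) < 0 := by
              nlinarith [mul_neg_of_neg_of_pos hprod hpos,
                sq_nonneg (sideC u v (x ⟨a, by omega⟩)), hpos, hprod]
            exact goal2
        · refine ⟨i₀, by simp [hi₀]; omega, by simp [hi₀]; omega, Or.inr (Or.inr ?_)⟩
          rw [hics, hisu]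
          exact ⟨hsc, hzb⟩
    · -- a = b - 1
      have hae : a = b - 1 := by omega
      set i₀ : Fin n := ⟨a, by omega⟩ with hi₀
      have hics : x i₀.castSucc = x ⟨a, by omega⟩ := by congr 1
      have hisu : x i₀.succ = x ⟨b, by omega⟩ := by
        congr 1
        ext
        simp [hi₀]
        omega
      rcases hcond with hprod | hzb
      · exact ⟨i₀, le_refl _, by simp [hi₀]; omega, Or.inl (by rw [hics, hisu]; exact hprod)⟩
      · exact ⟨i₀, le_refl _, by simp [hi₀]; omega, Or.inr (Or.inr (by rw [hics, hisu]; exact ⟨hs, hzb⟩))⟩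

lemma vfLine_comp_le {m : ℕ} (φ : Fin (m+1) → Fin (n+1)) (hφ : StrictMono φ) :
    vfLine u v (fun k => x (φ k)) ≤ vfLine u v x + 1 := by
  set y : Fin (m+1) → ℂ := fun k => x (φ k) with hy
  have key : ∀ k : Fin m, CrossSeg u v y k → sideC u v (y k.castSucc) ≠ 0 →
      ∃ i : Fin n, ((φ k.castSucc : ℕ) ≤ (i : ℕ) ∧ (i : ℕ) < (φ k.succ : ℕ)) ∧
        CrossSeg u v x i := by
    intro k hk hs
    have hab : (φ k.castSucc : ℕ) < (φ k.succ : ℕ) := hφ (Fin.castSucc_lt_succ (i := k))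
    have hb : (φ k.succ : ℕ) ≤ n := Fin.is_le _
    have e1 : (⟨(φ k.castSucc : ℕ), by omega⟩ : Fin (n+1)) = φ k.castSucc := Fin.eta _ _
    have e2 : (⟨(φ k.succ : ℕ), by omega⟩ : Fin (n+1)) = φ k.succ := Fin.eta _ _
    have hcond : sideC u v (x ⟨(φ k.castSucc : ℕ), by omega⟩) *
          sideC u v (x ⟨(φ k.succ : ℕ), by omega⟩) < 0 ∨
        sideC u v (x ⟨(φ k.succ : ℕ), by omega⟩) = 0 := by
      rw [e1, e2]
      rcases hk with h | h | h
      · exact Or.inl h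
      · exact absurd h.2 hs
      · exact Or.inr h.2
    obtain ⟨i, h1, h2, h3⟩ := exists_cross_between u v x (φ k.succ : ℕ) (φ k.castSucc : ℕ)
      hab hb (by rw [e1]; exact hs) hcond
    exact ⟨i, ⟨h1, h2⟩, h3⟩
  classical
  have hcard := Nat.card_le_card_of_injective
    (f := fun p : {k : Fin m // CrossSeg u v y k} =>
      if hs : sideC u v (y p.1.castSucc) = 0 then (none : Option {i : Fin n // CrossSeg u v x i})
      else some ⟨(key p.1 p.2 hs).choose, (key p.1 p.2 hs).choose_spec.2⟩) ?hinj
  case hinj =>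
    intro p q hpq
    rcases p with ⟨k, hk⟩
    rcases q with ⟨k', hk'⟩
    simp only at hpq
    by_cases hs1 : sideC u v (y (Fin.castSucc k)) = 0 <;>
      by_cases hs2 : sideC u v (y (Fin.castSucc k')) = 0
    · -- both zero: both must be index 0
      have h01 : (k : ℕ) = 0 := by
        rcases hk with h | h | h
        · rw [hs1] at h; simp at h
        · exact h.1
        · exact absurd hs1 h.1
      have h02 : (k' : ℕ) = 0 := by
        rcases hk' with h | h | h
        · rw [hs2] at h; simp at h
        · exact h.1
        · exact absurd hs2 h.1
      exact Subtype.ext (Fin.ext (h01.trans h02.symm))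
    · rw [dif_pos hs1, dif_neg hs2] at hpq; exact absurd hpq (by simp)
    · rw [dif_neg hs1, dif_pos hs2] at hpq; exact absurd hpq (by simp)
    · rw [dif_neg hs1, dif_neg hs2] at hpq
      have hiq := Option.some_injective _ hpq
      have hie : ((key k hk hs1).choose : Fin n) = (key k' hk' hs2).choose := by
        exact congrArg Subtype.val hiq
      have hsp1 := (key k hk hs1).choose_spec.1
      have hsp2 := (key k' hk' hs2).choose_spec.1
      rw [hie] at hsp1
      have : k = k' := by
        by_contra hne
        rcases lt_or_gt_of_ne hne with h | h
        · have : (φ k.succ : ℕ) ≤ (φ k'.castSucc : ℕ) := by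
            have : φ k.succ ≤ φ k'.castSucc := hφ.monotone (by
              rw [Fin.le_def]
              simp
              omega)
            exact this
          omega
        · have : (φ k'.succ : ℕ) ≤ (φ k.castSucc : ℕ) := by
            have : φ k'.succ ≤ φ k.castSucc := hφ.monotone (by
              rw [Fin.le_def]
              simp
              omega)
            exact this
          omega
      exact Subtype.ext this
  rw [Finite.card_option] at hcard
  exact hcard

lemma vf_comp_le {m : ℕ} (x : Fin (n+1) → ℂ) (φ : Fin (m+1) → Fin (n+1)) (hφ : StrictMono φ) :
    vf (fun k => x (φ k)) ≤ vf x + 1 := by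
  refine vf_le _ (fun u v hv => ?_)
  exact le_trans (vfLine_comp_le u v x φ hφ) (by
    have := vfLine_le_vf u v x hv
    omega)

end Cross
set_option maxHeartbeats 1000000 in
lemma key_list_bound (σ₁ σ₂ : Set ℂ) (hre1 : ∀ z ∈ σ₁, z.re < 0) (hre2 : ∀ z ∈ σ₂, 0 < z.re)
    (f h : ℂ → ℂ) (hh1 : ∀ z ∈ σ₁, h z = f z) (hh2 : ∀ z ∈ σ₂, h z = 0)
    (M : ℝ) (hM0 : 0 ≤ M) (hM : ∀ z ∈ σ₁, ‖f z‖ ≤ M)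
    {n : ℕ} (hn : 0 < n) (x : Fin (n+1) → ℂ) (hmem : ∀ i, x i ∈ σ₁ ∪ σ₂)
    (hne : ∀ i : Fin n, x i.castSucc ≠ x i.succ) :
    ENNReal.ofReal (cvar h x) ≤
      (vf x : ℝ≥0∞) * (2 * twoVar f σ₁ + ENNReal.ofReal M) := by
  classical
  set A : Fin (n+1) → Prop := fun i => x i ∈ σ₁ with hA_def
  have hdisj : ∀ z : ℂ, z ∈ σ₂ → z ∉ σ₁ := fun z h2 h1 =>
    absurd (hre1 _ h1) (not_lt.2 (hre2 _ h2).le)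
  set s : Finset (Fin (n+1)) := Finset.univ.filter
    (fun i => A i ∧ ∀ j, j < i → A j → (∀ k, j < k → k < i → ¬ A k) → x j ≠ x i) with hs_def
  have hmem_s : ∀ i, i ∈ s ↔
      (A i ∧ ∀ j, j < i → A j → (∀ k, j < k → k < i → ¬ A k) → x j ≠ x i) := by
    intro i; simp [hs_def]
  have hP : ∀ i : Fin (n+1), A i → ∃ j, j ∈ s ∧ j ≤ i ∧ x j = x i ∧
      ∀ k, j < k → k ≤ i → A k → k ∉ s := by
    have main : ∀ N : ℕ, ∀ i : Fin (n+1), (i : ℕ) = N → A i → ∃ j, j ∈ s ∧ j ≤ i ∧ x j = x i ∧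
        ∀ k, j < k → k ≤ i → A k → k ∉ s := by
      intro N
      induction N using Nat.strong_induction_on with
      | _ N IH =>
        intro i hiN hAi
        by_cases hi : i ∈ s
        · exact ⟨i, hi, le_refl _, rfl,
            fun k hk1 hk2 _ => absurd (lt_of_lt_of_le hk1 hk2) (lt_irrefl i)⟩
        · have hnc : ¬ ∀ j, j < i → A j → (∀ k, j < k → k < i → ¬ A k) → x j ≠ x i := by
            intro hc
            exact hi ((hmem_s i).mpr ⟨hAi, hc⟩)
          push_neg at hnc
          obtain ⟨j, hj1, hj2, hj3, hj4⟩ := hnc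
          obtain ⟨j', hs', hle', hx', hno'⟩ := IH (j : ℕ) (by rw [← hiN]; exact hj1) j rfl hj2
          refine ⟨j', hs', le_trans hle' hj1.le, by rw [hx', hj4], ?_⟩
          intro k hk1 hk2 hAk hks
          rcases le_or_gt k j with hkj | hkj
          · exact hno' k hk1 hkj hAk hks
          · rcases lt_or_eq_of_le hk2 with hki | hki
            · exact hj3 k hkj hki hAk
            · rw [hki] at hks; exact hi hks
    intro i hAi; exact main (i : ℕ) i rfl hAi
  have hF1 : ∀ a b : Fin (n+1), a ∈ s → b ∈ s → a < b →
      (∀ c, c ∈ s → a < c → c < b → False) → x a ≠ x b := by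
    intro a b has hbs hab hnoc
    obtain ⟨hAb, hcb⟩ := (hmem_s b).mp hbs
    have hAa : A a := ((hmem_s a).mp has).1
    set t := Finset.univ.filter (fun j : Fin (n+1) => j < b ∧ A j) with ht
    have hat : a ∈ t := by simp [ht, hab, hAa]
    have htne : t.Nonempty := ⟨a, hat⟩
    set j := t.max' htne with hj
    have hjt : j ∈ t := t.max'_mem htne
    have hjb : j < b := (Finset.mem_filter.mp hjt).2.1
    have hAj : A j := (Finset.mem_filter.mp hjt).2.2
    have himm : ∀ k, j < k → k < b → ¬ A k := by
      intro k hk1 hk2 hAk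
      have hkt : k ∈ t := by simp [ht, hk2, hAk]
      exact absurd (Finset.le_max' t k hkt) (not_le.mpr hk1)
    have hxjb : x j ≠ x b := hcb j hjb hAj himm
    obtain ⟨j', hs', hle', hx', hno'⟩ := hP j hAj
    have haj : a ≤ j := Finset.le_max' t a hat
    have hj'a : a ≤ j' := by
      by_contra hc
      push_neg at hc
      exact hno' a hc haj hAa has
    have hj'a2 : j' ≤ a := by
      by_contra hc
      push_neg at hc
      exact hnoc j' hs' hc (lt_of_le_of_lt hle' hjb)
    have heq : j' = a := le_antisymm hj'a2 hj'a
    rw [← heq, hx']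
    exact hxjb
  have hF2a : ∀ i : Fin n, A i.castSucc → A i.succ → i.succ ∈ s := by
    intro i h1 h2
    refine (hmem_s i.succ).mpr ⟨h2, ?_⟩
    intro j hj hAj himm
    rcases lt_trichotomy j i.castSucc with hlt | heq | hgt
    · exact absurd h1 (himm i.castSucc hlt (Fin.castSucc_lt_succ (i := i)))
    · rw [heq]; exact hne i
    · exfalso
      have h3 : (i.castSucc : ℕ) < (j : ℕ) := hgt
      have h4 : (j : ℕ) < (i.succ : ℕ) := hj
      simp only [Fin.coe_castSucc, Fin.val_succ] at h3 h4
      omega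
  have hF2b : ∀ i : Fin n, A i.castSucc → ∃ a, a ∈ s ∧ x a = x i.castSucc ∧
      a ≤ i.castSucc ∧ ∀ c, c ∈ s → a < c → c < i.succ → False := by
    intro i h1
    obtain ⟨j, hs', hle', hx', hno'⟩ := hP i.castSucc h1
    refine ⟨j, hs', hx', hle', ?_⟩
    intro c hcs hc1 hc2
    have hcA : A c := ((hmem_s c).mp hcs).1
    have hcle : c ≤ i.castSucc := by
      have h4 : (c : ℕ) < (i.succ : ℕ) := hc2
      have h5 : (c : ℕ) ≤ (i.castSucc : ℕ) := by
        simp only [Fin.val_succ] at h4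
        simp only [Fin.coe_castSucc]
        omega
      exact h5
    exact hno' c hc1 hcle hcA hcs
  by_cases hA : ∃ i, A i
  case neg =>
    push_neg at hA
    have hz : ∀ i : Fin (n+1), h (x i) = 0 := fun i => hh2 _ ((hmem i).resolve_left (hA i))
    have hzero : cvar h x = 0 := by
      apply Finset.sum_eq_zero
      intro i _
      rw [hz i.succ, hz i.castSucc, sub_zero]
      simp
    rw [hzero]
    simp
  case pos =>
    obtain ⟨i0, hAi0⟩ := hA
    have hsne : s.Nonempty := by
      obtain ⟨j, hjs, _⟩ := hP i0 hAi0
      exact ⟨j, hjs⟩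
    obtain ⟨m, hcard⟩ : ∃ m, s.card = m + 1 :=
      ⟨s.card - 1, by have := Finset.card_pos.mpr hsne; omega⟩
    set ψ := s.orderEmbOfFin hcard with hψ_def
    set y : Fin (m+1) → ℂ := fun k => x (ψ k) with hy
    have hψs : ∀ k, ψ k ∈ s := fun k => Finset.orderEmbOfFin_mem s hcard k
    have hψrange : ∀ c, c ∈ s → ∃ k, ψ k = c := by
      intro c hc
      have : c ∈ Set.range ψ := by rw [Finset.range_orderEmbOfFin]; exact hc
      exact this
    have hymem : ∀ k, y k ∈ σ₁ := fun k => ((hmem_s (ψ k)).mp (hψs k)).1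
    have hyne : ∀ k : Fin m, y k.castSucc ≠ y k.succ := by
      intro k
      refine hF1 _ _ (hψs _) (hψs _) (ψ.strictMono (Fin.castSucc_lt_succ (i := k))) ?_
      intro c hcs hc1 hc2
      obtain ⟨l, rfl⟩ := hψrange c hcs
      have h1 : k.castSucc < l := ψ.strictMono.lt_iff_lt.mp hc1
      have h2 : l < k.succ := ψ.strictMono.lt_iff_lt.mp hc2
      have h1' : (k.castSucc : ℕ) < (l : ℕ) := h1
      have h2' : (l : ℕ) < (k.succ : ℕ) := h2
      simp only [Fin.coe_castSucc, Fin.val_succ] at h1' h2'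
      omega
    have hyvar : ENNReal.ofReal (cvar f y) ≤ twoVar f σ₁ * (vf y : ℝ≥0∞) := by
      rcases Nat.eq_zero_or_pos m with hm | hm
      · subst hm
        have hzero : cvar f y = 0 := by simp [cvar]
        rw [hzero]; simp
      · have hle : ENNReal.ofReal (cvar f y) / (vf y : ℝ≥0∞) ≤ twoVar f σ₁ := by
          rw [twoVar]
          exact le_iSup_of_le m (le_iSup_of_le y (le_iSup_of_le hymem (le_iSup_of_le hyne le_rfl)))
        have hvy0 : (vf y : ℝ≥0∞) ≠ 0 := by
          simp only [ne_eq, Nat.cast_eq_zero]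
          have := one_le_vf y hm
          omega
        have hcancel := ENNReal.div_mul_cancel (b := ENNReal.ofReal (cvar f y)) hvy0
          (ENNReal.natCast_ne_top _)
        calc ENNReal.ofReal (cvar f y)
            = ENNReal.ofReal (cvar f y) / (vf y : ℝ≥0∞) * (vf y : ℝ≥0∞) := hcancel.symm
          _ ≤ twoVar f σ₁ * (vf y : ℝ≥0∞) := mul_le_mul_left hle _
    have hvfy : (vf y : ℝ≥0∞) ≤ 2 * (vf x : ℝ≥0∞) := by
      have h1 : vf y ≤ vf x + 1 := vf_comp_le x (fun k => ψ k) ψ.strictMono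
      have h2 : 1 ≤ vf x := one_le_vf x hn
      have h3 : vf y ≤ 2 * vf x := by omega
      calc (vf y : ℝ≥0∞) ≤ ((2 * vf x : ℕ) : ℝ≥0∞) := Nat.cast_le.mpr h3
        _ = 2 * (vf x : ℝ≥0∞) := by push_cast; ring
    set Bp : Fin n → Prop := fun i => A i.castSucc ∧ A i.succ with hBp
    set Mx : Fin n → Prop := fun i =>
      (A i.castSucc ∧ x i.succ ∈ σ₂) ∨ (x i.castSucc ∈ σ₂ ∧ A i.succ) with hMx
    have key2 : ∀ i : Fin n, Bp i →
        ∃ k : Fin m, ψ k.succ = i.succ ∧ x (ψ k.castSucc) = x i.castSucc := by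
      intro i hB
      obtain ⟨h1, h2⟩ := hB
      have hisucc : i.succ ∈ s := hF2a i h1 h2
      obtain ⟨a, has, hxa, hale, hnoc⟩ := hF2b i h1
      obtain ⟨k', hk'⟩ := hψrange i.succ hisucc
      obtain ⟨j, hj⟩ := hψrange a has
      have hjk : j < k' := by
        apply ψ.strictMono.lt_iff_lt.mp
        rw [hj, hk']
        exact lt_of_le_of_lt hale (Fin.castSucc_lt_succ (i := i))
      have hjk' : (j : ℕ) < (k' : ℕ) := hjk
      have hk'le : (k' : ℕ) ≤ m := Fin.is_le _
      set k : Fin m := ⟨(k' : ℕ) - 1, by omega⟩ with hk_def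
      have hksucc : k.succ = k' := by
        ext
        simp only [Fin.val_succ, hk_def]
        omega
      have hjlec : j ≤ k.castSucc := by
        rw [Fin.le_def]
        simp only [Fin.coe_castSucc, hk_def]
        omega
      have hccs : ψ k.castSucc = a := by
        rcases lt_or_eq_of_le (ψ.monotone hjlec) with hlt | heq
        · exfalso
          rw [hj] at hlt
          have h5 : ψ k.castSucc < ψ k.succ := ψ.strictMono (Fin.castSucc_lt_succ (i := k))
          rw [hksucc, hk'] at h5
          exact hnoc (ψ k.castSucc) (hψs _) hlt h5
        · rw [← heq, hj]
      exact ⟨k, by rw [hksucc, hk'], by rw [hccs, hxa]⟩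
    have habs : ∀ i : Fin n, ‖h (x i.succ) - h (x i.castSucc)‖ ≤
        (if Bp i then ‖f (x i.succ) - f (x i.castSucc)‖ else 0) +
        (if Mx i then M else 0) := by
      intro i
      rcases hmem i.castSucc with hc1 | hc1 <;> rcases hmem i.succ with hc2 | hc2
      · have hnm : ¬ Mx i := by
          rintro (⟨_, h2⟩ | ⟨h2, _⟩)
          · exact hdisj _ h2 hc2
          · exact hdisj _ h2 hc1
        rw [if_pos (show Bp i from ⟨hc1, hc2⟩), if_neg hnm, hh1 _ hc1, hh1 _ hc2, add_zero]
      · have hnb : ¬ Bp i := fun hb => hdisj _ hc2 hb.2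
        rw [if_neg hnb, if_pos (show Mx i from Or.inl ⟨hc1, hc2⟩), zero_add,
          hh2 _ hc2, hh1 _ hc1, zero_sub]
        simpa using hM _ hc1
      · have hnb : ¬ Bp i := fun hb => hdisj _ hc1 hb.1
        rw [if_neg hnb, if_pos (show Mx i from Or.inr ⟨hc1, hc2⟩), zero_add,
          hh2 _ hc1, hh1 _ hc2, sub_zero]
        exact hM _ hc2
      · have hnb : ¬ Bp i := fun hb => hdisj _ hc1 hb.1
        have hnm : ¬ Mx i := by
          rintro (⟨h2, _⟩ | ⟨_, h2⟩)
          · exact hdisj _ hc1 h2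
          · exact hdisj _ hc2 h2
        rw [if_neg hnb, if_neg hnm, hh2 _ hc1, hh2 _ hc2, sub_zero, add_zero]
        simp
    have hsum1 : ∑ i ∈ Finset.univ.filter Bp,
        ‖f (x i.succ) - f (x i.castSucc)‖ ≤ cvar f y := by
      rcases Finset.eq_empty_or_nonempty (Finset.univ.filter Bp) with he | hne'
      · rw [he, Finset.sum_empty]
        exact Finset.sum_nonneg fun k _ => norm_nonneg _
      · obtain ⟨i1, hi1⟩ := hne'
        have hBi1 : Bp i1 := (Finset.mem_filter.mp hi1).2
        obtain ⟨k1, _, _⟩ := key2 i1 hBi1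
        set e : Fin n → Fin m := fun i => if hB : Bp i then (key2 i hB).choose else k1 with he_def
        have hspec : ∀ i (hB : Bp i),
            ψ (e i).succ = i.succ ∧ x (ψ (e i).castSucc) = x i.castSucc := by
          intro i hB
          simp only [he_def, dif_pos hB]
          exact (key2 i hB).choose_spec
        have hinj : ∀ i ∈ Finset.univ.filter Bp, ∀ i' ∈ Finset.univ.filter Bp,
            e i = e i' → i = i' := by
          intro i hi i' hi' hee
          have h1 := (hspec i (Finset.mem_filter.mp hi).2).1
          have h2 := (hspec i' (Finset.mem_filter.mp hi').2).1
          rw [hee] at h1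
          have h3 : i.succ = i'.succ := by rw [← h1, ← h2]
          exact Fin.succ_injective _ h3
        calc ∑ i ∈ Finset.univ.filter Bp, ‖f (x i.succ) - f (x i.castSucc)‖
            = ∑ i ∈ Finset.univ.filter Bp,
                ‖f (y (e i).succ) - f (y (e i).castSucc)‖ := by
              apply Finset.sum_congr rfl
              intro i hi
              obtain ⟨hs1, hs2⟩ := hspec i (Finset.mem_filter.mp hi).2
              simp only [hy]
              rw [hs1, hs2]
          _ = ∑ k ∈ (Finset.univ.filter Bp).image e,
                ‖f (y k.succ) - f (y k.castSucc)‖ := (Finset.sum_image (f := fun k : Fin m =>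
                ‖f (y k.succ) - f (y k.castSucc)‖) hinj).symm
          _ ≤ ∑ k : Fin m, ‖f (y k.succ) - f (y k.castSucc)‖ :=
              Finset.sum_le_sum_of_subset_of_nonneg (Finset.subset_univ _)
                (fun k _ _ => norm_nonneg _)
          _ = cvar f y := rfl
    have hsum : cvar h x ≤ cvar f y + ((Finset.univ.filter Mx).card : ℝ) * M := by
      calc cvar h x
          ≤ ∑ i : Fin n, ((if Bp i then ‖f (x i.succ) - f (x i.castSucc)‖ else 0) +
              (if Mx i then M else 0)) := Finset.sum_le_sum (fun i _ => habs i)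
        _ = (∑ i : Fin n, if Bp i then ‖f (x i.succ) - f (x i.castSucc)‖ else 0) +
              (∑ i : Fin n, if Mx i then M else 0) := Finset.sum_add_distrib
        _ ≤ cvar f y + ((Finset.univ.filter Mx).card : ℝ) * M := by
            refine add_le_add ?_ ?_
            · rw [← Finset.sum_filter]
              exact hsum1
            · rw [← Finset.sum_filter, Finset.sum_const, nsmul_eq_mul]
    have hcardMx : (Finset.univ.filter Mx).card ≤ vf x := by
      have hsub : Finset.univ.filter Mx ⊆ Finset.univ.filter (CrossSeg 0 Complex.I x) := by
        intro i hi
        have hMxi : Mx i := (Finset.mem_filter.mp hi).2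
        refine Finset.mem_filter.mpr ⟨Finset.mem_univ _, Or.inl ?_⟩
        have hside : ∀ z : ℂ, sideC 0 Complex.I z = -z.re := by
          intro z
          simp [sideC, crossC, Complex.I_re, Complex.I_im]
        rw [hside, hside]
        rcases hMxi with ⟨h1, h2⟩ | ⟨h1, h2⟩
        · have := hre1 _ h1; have := hre2 _ h2; nlinarith
        · have := hre2 _ h1; have := hre1 _ h2; nlinarith
      have h1 : (Finset.univ.filter Mx).card ≤
          (Finset.univ.filter (CrossSeg 0 Complex.I x)).card := Finset.card_le_card hsub
      have h2 : (Finset.univ.filter (CrossSeg 0 Complex.I x)).card = vfLine 0 Complex.I x := by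
        rw [vfLine, Nat.card_eq_fintype_card, Fintype.card_subtype]
      have h3 : vfLine 0 Complex.I x ≤ vf x := vfLine_le_vf 0 Complex.I x Complex.I_ne_zero
      omega
    have hsecond : ENNReal.ofReal (((Finset.univ.filter Mx).card : ℝ) * M) ≤
        (vf x : ℝ≥0∞) * ENNReal.ofReal M := by
      rw [ENNReal.ofReal_mul (Nat.cast_nonneg _)]
      refine mul_le_mul' ?_ le_rfl
      rw [ENNReal.ofReal_natCast]
      exact Nat.cast_le.mpr hcardMx
    calc ENNReal.ofReal (cvar h x)
        ≤ ENNReal.ofReal (cvar f y + ((Finset.univ.filter Mx).card : ℝ) * M) :=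
          ENNReal.ofReal_le_ofReal hsum
      _ ≤ ENNReal.ofReal (cvar f y) + ENNReal.ofReal (((Finset.univ.filter Mx).card : ℝ) * M) :=
          ENNReal.ofReal_add_le
      _ ≤ twoVar f σ₁ * (vf y : ℝ≥0∞) + (vf x : ℝ≥0∞) * ENNReal.ofReal M :=
          add_le_add hyvar hsecond
      _ ≤ twoVar f σ₁ * (2 * (vf x : ℝ≥0∞)) + (vf x : ℝ≥0∞) * ENNReal.ofReal M :=
          add_le_add_left (mul_le_mul' le_rfl hvfy) _
      _ = (vf x : ℝ≥0∞) * (2 * twoVar f σ₁ + ENNReal.ofReal M) := by ring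
theorem stmt19 (σ₁ σ₂ : Set ℂ) (h1 : IsCompact σ₁) (h2 : IsCompact σ₂)
    (hn1 : σ₁.Nonempty) (hn2 : σ₂.Nonempty)
    (hre1 : ∀ z ∈ σ₁, z.re < 0) (hre2 : ∀ z ∈ σ₂, 0 < z.re)
    (g : ℂ → ℂ)
    (hg : ∀ ε > (0:ℝ), ∃ p : MvPolynomial (Fin 2) ℂ,
      BVnorm (fun z => g z - polyEval p z) σ₁ < ENNReal.ofReal ε)
    (ghat : ℂ → ℂ) (hghat : ∀ z, ghat z = if z ∈ σ₁ then g z else 0) :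
    ∀ ε > (0:ℝ), ∃ p : MvPolynomial (Fin 2) ℂ,
      BVnorm (fun z => ghat z
          - (if z.re ≤ 0 then (1:ℂ) else 0) * polyEval p z) (σ₁ ∪ σ₂)
        < ENNReal.ofReal ε := by
  intro ε hε
  obtain ⟨p, hp⟩ := hg (ε/4) (by linarith)
  refine ⟨p, ?_⟩
  set f : ℂ → ℂ := fun z => g z - polyEval p z with hf
  set h : ℂ → ℂ := fun z => ghat z - (if z.re ≤ 0 then (1:ℂ) else 0) * polyEval p z with hh
  have hdisj : ∀ z : ℂ, z ∈ σ₂ → z ∉ σ₁ := fun z ha hb =>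
    absurd (hre1 _ hb) (not_lt.2 (hre2 _ ha).le)
  set B := BVnorm f σ₁ with hB
  have hBlt : B < ENNReal.ofReal (ε/4) := hp
  have hBtop : B ≠ ⊤ := hBlt.trans_le le_top |>.ne
  set S₁ := ⨆ z ∈ σ₁, (‖f z‖₊ : ℝ≥0∞) with hS₁
  have hS₁B : S₁ ≤ B := by
    rw [hB, BVnorm]
    exact self_le_add_right _ _
  have htvB : twoVar f σ₁ ≤ B := by
    rw [hB, BVnorm]
    exact le_add_self
  have hS₁top : S₁ ≠ ⊤ := fun hc => hBtop (top_le_iff.mp (hc ▸ hS₁B))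
  set M := S₁.toReal with hM_def
  have hM0 : 0 ≤ M := ENNReal.toReal_nonneg
  have hM : ∀ z ∈ σ₁, ‖f z‖ ≤ M := by
    intro z hz
    have h1 : (‖f z‖₊ : ℝ≥0∞) ≤ S₁ :=
      le_iSup₂ (f := fun (z : ℂ) (_ : z ∈ σ₁) => (‖f z‖₊ : ℝ≥0∞)) z hz
    have h2 := ENNReal.toReal_mono hS₁top h1
    simpa [hM_def] using h2
  have hofM : ENNReal.ofReal M = S₁ := by
    rw [hM_def, ENNReal.ofReal_toReal hS₁top]
  have hh1 : ∀ z ∈ σ₁, h z = f z := by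
    intro z hz
    simp only [hh, hf]
    rw [hghat z, if_pos hz, if_pos (le_of_lt (hre1 z hz)), one_mul]
  have hh2 : ∀ z ∈ σ₂, h z = 0 := by
    intro z hz
    simp only [hh]
    rw [hghat z, if_neg (hdisj z hz), if_neg (not_le.mpr (hre2 z hz)), zero_mul, sub_zero]
  have hsup : (⨆ z ∈ σ₁ ∪ σ₂, (‖h z‖₊ : ℝ≥0∞)) ≤ S₁ := by
    refine iSup₂_le fun z hz => ?_
    rcases hz with hz | hz
    · rw [hh1 z hz]
      exact le_iSup₂ (f := fun (z : ℂ) (_ : z ∈ σ₁) => (‖f z‖₊ : ℝ≥0∞)) z hz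
    · rw [hh2 z hz]
      simp
  have htv : twoVar h (σ₁ ∪ σ₂) ≤ 2 * twoVar f σ₁ + S₁ := by
    rw [twoVar]
    refine iSup_le fun n => iSup_le fun x => iSup_le fun hmem => iSup_le fun hne => ?_
    rcases Nat.eq_zero_or_pos n with hn | hn
    · subst hn
      have hzero : cvar h x = 0 := by simp [cvar]
      rw [hzero]
      simp
    · have hkey := key_list_bound σ₁ σ₂ hre1 hre2 f h hh1 hh2 M hM0 hM hn x hmem hne
      refine ENNReal.div_le_of_le_mul' ?_
      rw [← hofM]
      exact hkey
  have htotal : BVnorm h (σ₁ ∪ σ₂) ≤ 4 * B := by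
    rw [BVnorm]
    calc (⨆ z ∈ σ₁ ∪ σ₂, (‖h z‖₊ : ℝ≥0∞)) + twoVar h (σ₁ ∪ σ₂)
        ≤ S₁ + (2 * twoVar f σ₁ + S₁) := add_le_add hsup htv
      _ ≤ B + (2 * B + B) := add_le_add hS₁B (add_le_add (mul_le_mul' le_rfl htvB) hS₁B)
      _ = 4 * B := by ring
  have h4 : (4 : ℝ≥0∞) * B < 4 * ENNReal.ofReal (ε/4) := by
    rw [ENNReal.mul_lt_mul_iff_right (by norm_num) (by norm_num)]
    exact hBlt
  have h5 : (4 : ℝ≥0∞) * ENNReal.ofReal (ε/4) = ENNReal.ofReal ε := by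
    have he : ε = 4 * (ε/4) := by ring
    rw [he, ENNReal.ofReal_mul (by norm_num : (0:ℝ) ≤ 4)]
    norm_num
  exact lt_of_le_of_lt htotal (by rw [← h5]; exact h4)
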